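/- There exists a unique h ∈ [0,1] satisfying the fixed point equation h = f(h, γ) = 1 − γ(1 − p⁻)·G(1 − q⁻·h) − (1 − γ)(1 − p⁺)·G(1 − q⁺·h). -/

import Mathlib

open Set

lemma mem01_aux {q h : ℝ} (hq : q ∈ Icc (0:ℝ) 1) (hh : h ∈ Icc (0:ℝ) 1) :
    1 - q * h ∈ Icc (0:ℝ) 1 := by
  constructor
  · nlinarith [hq.1, hq.2, hh.1, hh.2]
  · nlinarith [hq.1, hh.1]

lemma summable_aux (P : ℕ → ℝ) (hP : ∀ n, 0 ≤ P n) (hS : Summable P)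
    {x : ℝ} (hx : x ∈ Icc (0:ℝ) 1) : Summable (fun n => P n * x ^ n) := by
  apply Summable.of_nonneg_of_le (fun n => mul_nonneg (hP n) (pow_nonneg hx.1 n))
    (fun n => ?_) hS
  have : x ^ n ≤ 1 := pow_le_one₀ hx.1 hx.2
  nlinarith [hP n, pow_nonneg hx.1 n]

lemma contS (P : ℕ → ℝ) (hP : ∀ n, 0 ≤ P n) (hS : Summable P)
    {q : ℝ} (hq : q ∈ Icc (0:ℝ) 1) :
    ContinuousOn (fun h => ∑' n, P n * (1 - q * h) ^ n) (Icc (0:ℝ) 1) := by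
  rw [continuousOn_iff_continuous_restrict]
  apply continuous_tsum (f := fun n (x : Icc (0:ℝ) 1) => P n * (1 - q * x.1) ^ n)
    (u := P) (fun n => by fun_prop) hS
  intro n x
  have hx := mem01_aux hq x.2
  have h1 : (1 - q * x.1) ^ n ≤ 1 := pow_le_one₀ hx.1 hx.2
  have h2 : 0 ≤ (1 - q * x.1) ^ n := pow_nonneg hx.1 n
  rw [Real.norm_eq_abs, abs_mul, abs_of_nonneg (hP n), abs_of_nonneg h2]
  nlinarith [hP n]

lemma convS (P : ℕ → ℝ) (hP : ∀ n, 0 ≤ P n) (hS : Summable P)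
    {q : ℝ} (hq : q ∈ Icc (0:ℝ) 1) :
    ConvexOn ℝ (Icc (0:ℝ) 1) (fun h => ∑' n, P n * (1 - q * h) ^ n) := by
  refine ⟨convex_Icc _ _, ?_⟩
  intro x hx y hy a b ha hb hab
  simp only [smul_eq_mul]
  have hx' := mem01_aux hq hx
  have hy' := mem01_aux hq hy
  have hmem : a * x + b * y ∈ Icc (0:ℝ) 1 := by
    constructor
    · nlinarith [hx.1, hy.1]
    · nlinarith [hx.2, hy.2]
  have key : ∀ n, P n * (1 - q * (a * x + b * y)) ^ n ≤
      a * (P n * (1 - q * x) ^ n) + b * (P n * (1 - q * y) ^ n) := by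
    intro n
    have h1 : 1 - q * (a * x + b * y) = a * (1 - q * x) + b * (1 - q * y) := by
      have : a + b = 1 := hab
      ring_nf
      nlinarith [this]
    have h2 := (convexOn_pow n).2 (mem_Ici.mpr hx'.1) (mem_Ici.mpr hy'.1) ha hb hab
    simp only [smul_eq_mul] at h2
    rw [h1]
    nlinarith [hP n, h2]
  have s1 := summable_aux P hP hS hx'
  have s2 := summable_aux P hP hS hy'
  calc (∑' n, P n * (1 - q * (a * x + b * y)) ^ n)
      ≤ ∑' n, (a * (P n * (1 - q * x) ^ n) + b * (P n * (1 - q * y) ^ n)) :=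
        Summable.tsum_le_tsum key (summable_aux P hP hS (mem01_aux hq hmem))
          ((s1.mul_left a).add (s2.mul_left b))
    _ = a * (∑' n, P n * (1 - q * x) ^ n) + b * (∑' n, P n * (1 - q * y) ^ n) := by
        rw [Summable.tsum_add (s1.mul_left a) (s2.mul_left b), tsum_mul_left, tsum_mul_left]

theorem stmt_0 (P : ℕ → ℝ) (hP : ∀ n, 0 ≤ P n) (hPsum : ∑' n, P n = 1)
    (pm pp qm qp γ : ℝ)
    (hpm : pm ∈ Icc (0:ℝ) 1) (hpp : pp ∈ Icc (0:ℝ) 1)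
    (hqm : qm ∈ Icc (0:ℝ) 1) (hqp : qp ∈ Icc (0:ℝ) 1)
    (hγ : γ ∈ Icc (0:ℝ) 1)
    (hpos : 0 < γ * pm + (1 - γ) * pp) :
    ∃! h : ℝ, h ∈ Icc (0:ℝ) 1 ∧
      h = 1 - γ * (1 - pm) * (∑' n, P n * (1 - qm * h) ^ n)
            - (1 - γ) * (1 - pp) * (∑' n, P n * (1 - qp * h) ^ n) := by
  have hS : Summable P := by
    by_contra hs
    rw [tsum_eq_zero_of_not_summable hs] at hPsum
    norm_num at hPsum
  set Sm : ℝ → ℝ := fun h => ∑' n, P n * (1 - qm * h) ^ n with hSm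
  set Sp : ℝ → ℝ := fun h => ∑' n, P n * (1 - qp * h) ^ n with hSp
  set φ : ℝ → ℝ := fun h => h - 1 + γ * (1 - pm) * Sm h + (1 - γ) * (1 - pp) * Sp h with hφ
  have hc1 : 0 ≤ γ * (1 - pm) := mul_nonneg hγ.1 (by linarith [hpm.2])
  have hc2 : 0 ≤ (1 - γ) * (1 - pp) := mul_nonneg (by linarith [hγ.2]) (by linarith [hpp.2])
  -- φ 0 < 0
  have hS0 : ∀ q : ℝ, (∑' n, P n * (1 - q * 0) ^ n) = 1 := by
    intro q; simp [hPsum]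
  have hφ0 : φ 0 = -(γ * pm + (1 - γ) * pp) := by
    simp only [hφ, hSm, hSp]
    rw [hS0, hS0]; ring
  have hφ0neg : φ 0 < 0 := by rw [hφ0]; linarith
  -- φ 1 ≥ 0
  have hφ1 : 0 ≤ φ 1 := by
    have h1 : 0 ≤ Sm 1 := tsum_nonneg fun n =>
      mul_nonneg (hP n) (pow_nonneg (mem01_aux hqm (by norm_num)).1 n)
    have h2 : 0 ≤ Sp 1 := tsum_nonneg fun n =>
      mul_nonneg (hP n) (pow_nonneg (mem01_aux hqp (by norm_num)).1 n)
    simp only [hφ]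
    nlinarith [mul_nonneg hc1 h1, mul_nonneg hc2 h2]
  -- continuity
  have hcont : ContinuousOn φ (Icc (0:ℝ) 1) := by
    apply ContinuousOn.add
    apply ContinuousOn.add
    · fun_prop
    · exact (contS P hP hS hqm).const_smul (γ * (1 - pm)) |>.congr (fun x _ => by
        simp [smul_eq_mul, hSm])
    · exact (contS P hP hS hqp).const_smul ((1 - γ) * (1 - pp)) |>.congr (fun x _ => by
        simp [smul_eq_mul, hSp])
  -- convexity
  have hconv : ConvexOn ℝ (Icc (0:ℝ) 1) φ := by
    have hid : ConvexOn ℝ (Icc (0:ℝ) 1) (fun h : ℝ => h - 1) := by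
      refine ⟨convex_Icc _ _, ?_⟩
      intro x _ y _ a b ha hb hab
      simp only [smul_eq_mul]
      nlinarith
    have h1 := (convS P hP hS hqm).smul hc1
    have h2 := (convS P hP hS hqp).smul hc2
    have := (hid.add h1).add h2
    exact this.congr (fun x _ => by simp [hφ, hSm, hSp, smul_eq_mul])
  -- existence via IVT
  have hsub := intermediate_value_Icc (by norm_num : (0:ℝ) ≤ 1) hcont
  have h0mem : (0:ℝ) ∈ Icc (φ 0) (φ 1) := ⟨le_of_lt hφ0neg, hφ1⟩
  obtain ⟨h, hhmem, hhval⟩ := hsub h0mem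
  -- key: uniqueness of zeros of φ
  have uniq : ∀ a b, a ∈ Icc (0:ℝ) 1 → b ∈ Icc (0:ℝ) 1 → φ a = 0 → φ b = 0 → a ≤ b → a = b := by
    intro a b ha hb hφa hφb hab
    rcases eq_or_lt_of_le hab with rfl | hlt
    · rfl
    have ha0 : 0 < a := by
      rcases eq_or_lt_of_le ha.1 with h' | h'
      · exfalso; rw [← h'] at hφa; linarith
      · exact h'
    have hb0 : 0 < b := lt_trans ha0 hlt
    set t : ℝ := a / b with ht
    have ht0 : 0 < t := div_pos ha0 hb0
    have ht1 : t < 1 := (div_lt_one hb0).mpr hlt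
    have hrepr : a = (1 - t) * 0 + t * b := by
      rw [ht, mul_zero, zero_add, div_mul_cancel₀ a hb0.ne']
    have := hconv.2 (show (0:ℝ) ∈ Icc (0:ℝ) 1 by norm_num) hb
      (by linarith : (0:ℝ) ≤ 1 - t) (le_of_lt ht0) (by ring)
    simp only [smul_eq_mul] at this
    rw [← hrepr] at this
    nlinarith
  -- equivalence between the equation and φ = 0
  have hequiv : ∀ x : ℝ, (x = 1 - γ * (1 - pm) * Sm x - (1 - γ) * (1 - pp) * Sp x) ↔ φ x = 0 := by
    intro x; simp only [hφ]; constructor <;> intro hx <;> linarith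
  refine ⟨h, ⟨hhmem, (hequiv h).mpr hhval⟩, ?_⟩
  intro y ⟨hymem, hyeq⟩
  have hφy : φ y = 0 := (hequiv y).mp hyeq
  rcases le_total y h with hle | hle
  · exact (uniq y h hymem hhmem hφy hhval hle).symm ▸ rfl
  · exact (uniq h y hhmem hymem hhval hφy hle).symm
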